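/- For every countable graph G and every integer k ≥ 1, G has property FIN_k if and only if χ*(G) = k. -/

import Mathlib

/-- There is an increasing path on `k` vertices in `G` under the vertex labeling `φ`. -/
def IncrPathOn {V : Type*} (G : SimpleGraph V) (φ : V → ℕ) (k : ℕ) : Prop :=
  ∃ w : ℕ → V, (∀ i j, i < k → j < k → w i = w j → i = j) ∧
    ∀ i, i + 1 < k → G.Adj (w i) (w (i + 1)) ∧ φ (w i) < φ (w (i + 1))

/-- There is an infinite increasing path in `G` under the vertex labeling `φ`. -/
def InfIncrPath {V α : Type*} [Preorder α] (G : SimpleGraph V) (φ : V → α) : Prop :=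
  ∃ w : ℕ → V, Function.Injective w ∧ ∀ i, G.Adj (w i) (w (i + 1)) ∧ φ (w i) < φ (w (i + 1))

/-- `V(G)` can be partitioned into `k` independent sets `V_1, …, V_k` such that every vertex
of `V_j` has only finitely many neighbours in `V_1 ∪ ⋯ ∪ V_{j-1}`. -/
def HasChiStarPartition {V : Type*} (G : SimpleGraph V) (k : ℕ) : Prop :=
  ∃ P : V → Fin k, (∀ u v, G.Adj u v → P u ≠ P v) ∧
    ∀ v, {u | G.Adj v u ∧ (P u : ℕ) < (P v : ℕ)}.Finite

/-- Property `FIN_k`: every bijective labeling of `V` by `ℕ` yields an increasing path on `k`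
vertices, but some bijective labeling yields no increasing path on `k + 1` vertices. -/
def FINk {V : Type*} (G : SimpleGraph V) (k : ℕ) : Prop :=
  (∀ φ : V ≃ ℕ, IncrPathOn G (fun v => φ v) k) ∧
  (∃ φ : V ≃ ℕ, ¬ IncrPathOn G (fun v => φ v) (k + 1))

namespace Stmt7Aux

variable {V : Type*}

lemma incrPathOn_mono (G : SimpleGraph V) {φ : V → ℕ} {j k : ℕ} (h : j ≤ k)
    (hp : IncrPathOn G φ k) : IncrPathOn G φ j := by
  obtain ⟨w, hi, hc⟩ := hp
  exact ⟨w, fun a b ha hb => hi a b (ha.trans_le h) (hb.trans_le h),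
    fun i hi' => hc i (hi'.trans_le h)⟩

lemma chain_mono {φ : V → ℕ} {w : ℕ → V} {k : ℕ}
    (hc : ∀ i, i + 1 < k → φ (w i) < φ (w (i + 1))) :
    ∀ i j, i < j → j < k → φ (w i) < φ (w j) := by
  intro i j hij hjk
  induction j with
  | zero => omega
  | succ j ih =>
    rcases Nat.lt_or_ge i j with h | h
    · exact (ih h (by omega)).trans (hc j hjk)
    · have : i = j := by omega
      subst this; exact hc i hjk

lemma incrPathOn_of_chain (G : SimpleGraph V) {φ : V → ℕ} {k : ℕ} (w : ℕ → V)
    (hc : ∀ i, i + 1 < k → G.Adj (w i) (w (i + 1)) ∧ φ (w i) < φ (w (i + 1))) :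
    IncrPathOn G φ k := by
  refine ⟨w, ?_, hc⟩
  intro i j hik hjk hij
  by_contra hne
  rcases Nat.lt_or_ge i j with h | h
  · have := chain_mono (fun i h => (hc i h).2) i j h hjk
    rw [hij] at this; omega
  · have hj : j < i := by omega
    have := chain_mono (fun i h => (hc i h).2) j i hj hik
    rw [hij] at this; omega

open Classical in
/-- `Lfun G φ n` is (a recursive version of) the maximum number of vertices on an increasing
path ending at the vertex with label `n`. -/
noncomputable def Lfun (G : SimpleGraph V) (φ : V ≃ ℕ) (n : ℕ) : ℕ :=
  1 + (Finset.range n).attach.sup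
      (fun m => if G.Adj (φ.symm m.1) (φ.symm n) then Lfun G φ m.1 else 0)
termination_by n
decreasing_by exact Finset.mem_range.mp m.2

lemma Lfun_pos (G : SimpleGraph V) (φ : V ≃ ℕ) (n : ℕ) : 1 ≤ Lfun G φ n := by
  rw [Lfun]; omega

lemma Lfun_lt (G : SimpleGraph V) (φ : V ≃ ℕ) {m n : ℕ} (hmn : m < n)
    (hadj : G.Adj (φ.symm m) (φ.symm n)) : Lfun G φ m < Lfun G φ n := by
  conv_rhs => rw [Lfun]
  classical
  have hmem : (⟨m, Finset.mem_range.mpr hmn⟩ : {x // x ∈ Finset.range n}) ∈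
      (Finset.range n).attach := Finset.mem_attach _ _
  have := Finset.le_sup (f := fun m : {x // x ∈ Finset.range n} =>
    if G.Adj (φ.symm m.1) (φ.symm n) then Lfun G φ m.1 else 0) hmem
  simp only [hadj, if_true] at this
  omega

lemma pathEnd (G : SimpleGraph V) (φ : V ≃ ℕ) (n : ℕ) :
    ∃ w : ℕ → V, w (Lfun G φ n - 1) = φ.symm n ∧
      ∀ i, i + 1 < Lfun G φ n → G.Adj (w i) (w (i + 1)) ∧ φ (w i) < φ (w (i + 1)) := by
  classical
  induction n using Nat.strong_induction_on with
  | _ n ih =>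
    set s := (Finset.range n).attach.sup
      (fun m : {x // x ∈ Finset.range n} =>
        if G.Adj (φ.symm m.1) (φ.symm n) then Lfun G φ m.1 else 0) with hs
    have hLn : Lfun G φ n = 1 + s := by rw [Lfun]
    rcases Nat.eq_zero_or_pos s with hs0 | hspos
    · refine ⟨fun _ => φ.symm n, by rw [hLn, hs0], ?_⟩
      intro i hi; rw [hLn, hs0] at hi; omega
    · have hne : ((Finset.range n).attach).Nonempty := by
        by_contra h
        rw [Finset.not_nonempty_iff_eq_empty] at h
        rw [hs, h, Finset.sup_empty] at hspos
        simp at hspos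
      obtain ⟨b, _, hb⟩ := Finset.exists_mem_eq_sup _ hne
        (fun m : {x // x ∈ Finset.range n} =>
          if G.Adj (φ.symm m.1) (φ.symm n) then Lfun G φ m.1 else 0)
      rw [← hs] at hb
      have hadj : G.Adj (φ.symm b.1) (φ.symm n) := by
        by_contra h
        rw [if_neg h] at hb; omega
      rw [if_pos hadj] at hb
      have hbn : b.1 < n := Finset.mem_range.mp b.2
      obtain ⟨w, hwend, hwch⟩ := ih b.1 hbn
      have hLb : Lfun G φ b.1 = s := hb.symm
      refine ⟨fun i => if i < s then w i else φ.symm n, ?_, ?_⟩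
      · rw [hLn]; simp
      · intro i hi
        rw [hLn] at hi
        have his : i < s := by omega
        rcases Nat.lt_or_ge (i + 1) s with h1 | h1
        · simp only [if_pos his, if_pos h1]
          exact hwch i (by omega)
        · have hi1 : i + 1 = s := by omega
          have hieq : i = Lfun G φ b.1 - 1 := by omega
          simp only [if_pos his, if_neg (by omega : ¬ i + 1 < s)]
          rw [hieq, hwend]
          refine ⟨hadj, ?_⟩
          simp only [Equiv.apply_symm_apply]
          exact hbn

lemma partition_of_no_path (G : SimpleGraph V) (φ : V ≃ ℕ) (K : ℕ)
    (h : ¬ IncrPathOn G (fun v => φ v) (K + 1)) : HasChiStarPartition G K := by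
  have hLle : ∀ n, Lfun G φ n ≤ K := by
    intro n
    by_contra hlt
    push_neg at hlt
    obtain ⟨w, _, hchain⟩ := pathEnd G φ n
    exact h (incrPathOn_of_chain G w (fun i hi => hchain i (by omega)))
  refine ⟨fun v => ⟨Lfun G φ (φ v) - 1, by
    have h1 := hLle (φ v); have h2 := Lfun_pos G φ (φ v); omega⟩, ?_, ?_⟩
  · intro u v hadj heq
    have h1 := Lfun_pos G φ (φ u)
    have h2 := Lfun_pos G φ (φ v)
    have heq' : Lfun G φ (φ u) - 1 = Lfun G φ (φ v) - 1 := congrArg Fin.val heq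
    rcases lt_trichotomy (φ u) (φ v) with h3 | h3 | h3
    · have := Lfun_lt G φ h3 (by simpa using hadj)
      omega
    · exact hadj.ne (φ.injective h3)
    · have := Lfun_lt G φ h3 (by simpa using hadj.symm)
      omega
  · intro v
    refine Set.Finite.subset (Set.Finite.preimage φ.injective.injOn
      (Set.finite_Iio (φ v))) ?_
    rintro u ⟨hadj, hlt⟩
    have hlt' : Lfun G φ (φ u) - 1 < Lfun G φ (φ v) - 1 := hlt
    have h1 := Lfun_pos G φ (φ u)
    have h2 := Lfun_pos G φ (φ v)
    simp only [Set.mem_preimage, Set.mem_Iio]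
    by_contra hge
    push_neg at hge
    rcases eq_or_lt_of_le hge with h3 | h3
    · exact hadj.ne (φ.injective h3.symm).symm
    · have := Lfun_lt G φ h3 (by simpa using hadj)
      omega

/-- The downward closure of a vertex under the relation "is a neighbour in a smaller class". -/
noncomputable def Cl (G : SimpleGraph V) {k : ℕ} (P : V → Fin k) (v : V) : Set V :=
  {v} ∪ ⋃ (u : {u // G.Adj v u ∧ (P u : ℕ) < (P v : ℕ)}), Cl G P u.1
termination_by (P v : ℕ)
decreasing_by exact u.2.2

lemma mem_Cl_self (G : SimpleGraph V) {k : ℕ} (P : V → Fin k) (v : V) : v ∈ Cl G P v := by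
  rw [Cl]; left; rfl

lemma mem_Cl_of_D (G : SimpleGraph V) {k : ℕ} (P : V → Fin k) {u v : V}
    (h : G.Adj v u ∧ (P u : ℕ) < (P v : ℕ)) : u ∈ Cl G P v := by
  rw [Cl]; right
  exact Set.mem_iUnion.mpr ⟨⟨u, h⟩, mem_Cl_self G P u⟩

lemma Cl_subset (G : SimpleGraph V) {k : ℕ} (P : V → Fin k) :
    ∀ v u, u ∈ Cl G P v → Cl G P u ⊆ Cl G P v := by
  have key : ∀ n v, (P v : ℕ) = n → ∀ u, u ∈ Cl G P v → Cl G P u ⊆ Cl G P v := by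
    intro n
    induction n using Nat.strong_induction_on with
    | _ n ih =>
      intro v hn u hu
      rw [Cl] at hu
      rcases hu with hu | hu
      · rw [Set.mem_singleton_iff] at hu; subst hu; exact subset_rfl
      · obtain ⟨⟨u', hu'⟩, hmem⟩ := Set.mem_iUnion.mp hu
        have h1 : Cl G P u ⊆ Cl G P u' := ih (P u' : ℕ) (by omega) u' rfl u hmem
        have h2 : Cl G P u' ⊆ Cl G P v := by
          conv_rhs => rw [Cl]
          exact (Set.subset_iUnion
            (fun u : {u // G.Adj v u ∧ (P u : ℕ) < (P v : ℕ)} => Cl G P u.1)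
            ⟨u', hu'⟩).trans Set.subset_union_right
        exact h1.trans h2
  exact fun v => key _ v rfl

lemma Cl_P_le (G : SimpleGraph V) {k : ℕ} (P : V → Fin k) :
    ∀ v u, u ∈ Cl G P v → (P u : ℕ) ≤ (P v : ℕ) := by
  have key : ∀ n v, (P v : ℕ) = n → ∀ u, u ∈ Cl G P v → (P u : ℕ) ≤ (P v : ℕ) := by
    intro n
    induction n using Nat.strong_induction_on with
    | _ n ih =>
      intro v hn u hu
      rw [Cl] at hu
      rcases hu with hu | hu
      · rw [Set.mem_singleton_iff] at hu; subst hu; exact le_rfl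
      · obtain ⟨⟨u', hu'⟩, hmem⟩ := Set.mem_iUnion.mp hu
        have := ih (P u' : ℕ) (by omega) u' rfl u hmem
        omega
  exact fun v => key _ v rfl

lemma Cl_finite (G : SimpleGraph V) {k : ℕ} (P : V → Fin k)
    (hfin : ∀ v, {u | G.Adj v u ∧ (P u : ℕ) < (P v : ℕ)}.Finite) :
    ∀ v, (Cl G P v).Finite := by
  have key : ∀ n v, (P v : ℕ) = n → (Cl G P v).Finite := by
    intro n
    induction n using Nat.strong_induction_on with
    | _ n ih =>
      intro v hn
      rw [Cl]
      refine (Set.finite_singleton v).union ?_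
      haveI : Finite {u // G.Adj v u ∧ (P u : ℕ) < (P v : ℕ)} := (hfin v).to_subtype
      exact Set.finite_iUnion (fun u => ih (P u.1 : ℕ) (by omega) u.1 rfl)
  exact fun v => key _ v rfl

lemma no_path_of_partition (G : SimpleGraph V) [Countable V] [Infinite V] {k : ℕ}
    (hp : HasChiStarPartition G k) :
    ∃ φ : V ≃ ℕ, ¬ IncrPathOn G (fun v => φ v) (k + 1) := by
  classical
  obtain ⟨P, hind, hfin⟩ := hp
  obtain ⟨_inst⟩ := nonempty_denumerable V
  let e : V ≃ ℕ := Denumerable.eqv V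
  have hCfin := Cl_finite G P hfin
  let ρ : V → ℕ := fun v => (Cl G P v).ncard
  have hex : ∀ v : V, ∃ n, v ∈ Cl G P (e.symm n) := fun v =>
    ⟨e v, by simpa using mem_Cl_self G P v⟩
  let m : V → ℕ := fun v => Nat.find (hex v)
  have hm : ∀ v, v ∈ Cl G P (e.symm (m v)) := fun v => Nat.find_spec (hex v)
  have hm_le : ∀ {u v : V}, u ∈ Cl G P v → m u ≤ m v := by
    intro u v huv
    exact Nat.find_le (Cl_subset G P _ _ (hm v) huv)
  have hρ_lt : ∀ {u v : V}, G.Adj v u → (P u : ℕ) < (P v : ℕ) → ρ u < ρ v := by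
    intro u v hadj hPlt
    refine Set.ncard_lt_ncard ?_ (hCfin v)
    constructor
    · exact Cl_subset G P v u (mem_Cl_of_D G P ⟨hadj, hPlt⟩)
    · intro hsub
      have := Cl_P_le G P u v (hsub (mem_Cl_self G P v))
      omega
  let key : V → ℕ ×ₗ (ℕ ×ₗ ℕ) := fun v => toLex (m v, toLex (ρ v, e v))
  have key_inj : Function.Injective key := by
    intro u v h
    have h1 : (m u, toLex (ρ u, e u)) = (m v, toLex (ρ v, e v)) := toLex.injective h
    have h2 : (ρ u, e u) = (ρ v, e v) := toLex.injective (congrArg Prod.snd h1)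
    exact e.injective (congrArg Prod.snd h2)
  have key_lt_iff : ∀ u v : V, key u < key v ↔
      (m u < m v ∨ (m u = m v ∧ (ρ u < ρ v ∨ (ρ u = ρ v ∧ e u < e v)))) := by
    intro u v
    rw [Prod.Lex.lt_iff, Prod.Lex.lt_iff]
    exact Iff.rfl
  have key_D : ∀ {u v : V}, G.Adj v u → (P u : ℕ) < (P v : ℕ) → key u < key v := by
    intro u v hadj hPlt
    have h1 : m u ≤ m v := hm_le (mem_Cl_of_D G P ⟨hadj, hPlt⟩)
    have h2 : ρ u < ρ v := hρ_lt hadj hPlt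
    rw [key_lt_iff]; omega
  have finseg : ∀ v : V, {u | key u < key v}.Finite := by
    intro v
    refine Set.Finite.subset (Set.Finite.biUnion (Set.finite_Iic (m v))
      (fun n _ => hCfin (e.symm n))) ?_
    intro u hu
    rw [Set.mem_setOf_eq, key_lt_iff] at hu
    have : m u ≤ m v := by omega
    exact Set.mem_biUnion (Set.mem_Iic.mpr this) (hm u)
  let φ0 : V → ℕ := fun v => {u | key u < key v}.ncard
  have φ0_mono : ∀ {u v : V}, key u < key v → φ0 u < φ0 v := by
    intro u v h
    refine Set.ncard_lt_ncard ?_ (finseg v)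
    constructor
    · exact fun w hw => lt_trans hw h
    · intro hsub
      have : key u < key u := hsub h
      exact lt_irrefl _ this
  have φ0_inj : Function.Injective φ0 := by
    intro u v h
    by_contra hne
    rcases lt_or_gt_of_ne (fun hk : key u = key v => hne (key_inj hk)) with h1 | h1
    · exact absurd h (Nat.ne_of_lt (φ0_mono h1))
    · exact absurd h.symm (Nat.ne_of_lt (φ0_mono h1))
  have φ0_surj : Function.Surjective φ0 := by
    intro n
    have hbig : ∃ v : V, n ≤ φ0 v := by
      by_contra hall
      push_neg at hall
      have : Function.Injective (fun v : V => (⟨φ0 v, hall v⟩ : Fin n)) := by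
        intro u v h
        exact φ0_inj (congrArg Fin.val h)
      haveI : Finite V := Finite.of_injective _ this
      exact not_finite V
    obtain ⟨v0, hv0⟩ := hbig
    have hexc : ∃ c, (∃ v, φ0 v = c) ∧ n ≤ c := ⟨φ0 v0, ⟨v0, rfl⟩, hv0⟩
    obtain ⟨⟨v, hv⟩, hnc⟩ := Nat.find_spec hexc
    rcases eq_or_lt_of_le hnc with heq | hlt
    · exact ⟨v, by omega⟩
    · exfalso
      have hv' : ({u | key u < key v}).ncard = Nat.find hexc := hv
      have hAne : {u | key u < key v}.Nonempty := by
        rcases Set.eq_empty_or_nonempty {u | key u < key v} with h | h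
        · rw [h, Set.ncard_empty] at hv'; omega
        · exact h
      obtain ⟨u, huA, hmax⟩ := Set.Finite.exists_maximalFor key _ (finseg v) hAne
      have hstep : {w | key w < key u} = {u' | key u' < key v} \ {u} := by
        ext w
        simp only [Set.mem_setOf_eq, Set.mem_diff, Set.mem_singleton_iff]
        constructor
        · intro hw
          exact ⟨lt_trans hw huA, fun h => absurd (h ▸ hw) (lt_irrefl _)⟩
        · rintro ⟨hwv, hwu⟩
          rcases lt_trichotomy (key w) (key u) with h | h | h
          · exact h
          · exact absurd (key_inj h) hwu
          · exact absurd (hmax hwv h.le) (not_le.mpr h)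
      have hφu : φ0 u = Nat.find hexc - 1 := by
        show ({w | key w < key u}).ncard = _
        rw [hstep, Set.ncard_diff_singleton_of_mem huA, hv']
      have hcon := Nat.find_min hexc (m := Nat.find hexc - 1) (by omega)
      exact hcon ⟨⟨u, hφu⟩, by omega⟩
  let φe : V ≃ ℕ := Equiv.ofBijective φ0 ⟨φ0_inj, φ0_surj⟩
  refine ⟨φe, ?_⟩
  rintro ⟨w, hwi, hch⟩
  have hkey : ∀ i, i < k → key (w i) < key (w (i + 1)) := by
    intro i hi
    obtain ⟨hadj, hφ⟩ := hch i (by omega)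
    by_contra hle
    push_neg at hle
    rcases eq_or_lt_of_le hle with heq | hlt
    · have := key_inj heq
      rw [this] at hφ; omega
    · have := φ0_mono hlt
      have hφ' : φ0 (w i) < φ0 (w (i + 1)) := hφ
      omega
  have hP : ∀ i, i < k → (P (w i) : ℕ) < (P (w (i + 1)) : ℕ) := by
    intro i hi
    obtain ⟨hadj, _⟩ := hch i (by omega)
    have hne := hind _ _ hadj
    rcases Nat.lt_or_ge (P (w (i + 1)) : ℕ) (P (w i) : ℕ) with h | h
    · have := key_D hadj h
      exact absurd (hkey i hi) (asymm this)
    · rcases eq_or_lt_of_le h with heq | hlt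
      · exact absurd (Fin.ext heq) hne
      · exact hlt
  have hmono : ∀ i, i ≤ k → i ≤ (P (w i) : ℕ) := by
    intro i
    induction i with
    | zero => omega
    | succ i ih =>
      intro hik
      have := hP i (by omega)
      have := ih (by omega)
      omega
  have h1 := hmono k le_rfl
  have h2 := (P (w k)).isLt
  omega

end Stmt7Aux

theorem stmt7 {V : Type*} [Countable V] [Infinite V] (G : SimpleGraph V)
    (k : ℕ) (hk : 1 ≤ k) :
    FINk G k ↔ (HasChiStarPartition G k ∧ ∀ j < k, ¬ HasChiStarPartition G j) := by
  constructor
  · rintro ⟨h1, φ, hφ⟩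
    refine ⟨Stmt7Aux.partition_of_no_path G φ k hφ, ?_⟩
    intro j hj hPart
    obtain ⟨ψ, hψ⟩ := Stmt7Aux.no_path_of_partition G hPart
    exact hψ (Stmt7Aux.incrPathOn_mono G (by omega) (h1 ψ))
  · rintro ⟨hPk, hnot⟩
    constructor
    · intro φ
      by_contra hno
      have hkk : k - 1 + 1 = k := Nat.succ_pred_eq_of_pos hk
      rw [← hkk] at hno
      exact hnot (k - 1) (by omega) (Stmt7Aux.partition_of_no_path G φ (k - 1) hno)
    · exact Stmt7Aux.no_path_of_partition G hPk
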